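/- arXiv:0712.1286 — 2 statements merged into one kernel-verified Lean document; each statement's English description precedes it below -/
import Mathlib

section
/- Let p be a prime, r > 0 with r² = p, κ an integer, and γ, α nonzero complex numbers. Set μ₀ := γ⁻¹·p^((3κ-7)/2), μ₁ := γ², μ₂ := α·r, μ₃ := α⁻¹·r. Then, as polynomials in X over ℂ, ∏_{S ⊆ {1,2,3}} (1 - μ₀·(∏_{i∈S} μᵢ)·X) = [∏_{ε=±1} (1 - γ^ε·p^((κ-1)/2)·p^(κ-2)·X)·(1 - γ^ε·p^((κ-1)/2)·p^(κ-3)·X)] · [∏_{ε=±1} ∏_{δ=±1} (1 - γ^ε·α^δ·p^((κ-1)/2)·p^((2κ-5)/2)·X)]. -/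
open Polynomial

/-- Factorization of the local spinor L-factor of a degree-3 Miyawaki lift:
∏_{S⊆{1,2,3}} (1 - μ₀(∏_{i∈S}μᵢ)X) equals the product of the local factors of
L(s-κ+2,f), L(s-κ+3,f) and the Rankin convolution L(s,f⊗g). -/
theorem spinor_factorization (p : ℕ) (hp : Nat.Prime p) (r : ℝ) (hr : 0 < r)
    (hr2 : r ^ 2 = (p : ℝ)) (κ : ℤ) (γ α : ℂ) (hγ : γ ≠ 0) (hα : α ≠ 0)
    (μ₀ : ℂ) (hμ₀ : μ₀ = γ⁻¹ * (r : ℂ) ^ (3 * κ - 7))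
    (μ : ℕ → ℂ) (hμ1 : μ 1 = γ ^ 2) (hμ2 : μ 2 = α * (r : ℂ)) (hμ3 : μ 3 = α⁻¹ * (r : ℂ)) :
    ∏ S ∈ ({1, 2, 3} : Finset ℕ).powerset, (1 - C (μ₀ * ∏ i ∈ S, μ i) * X)
      = ((1 - C (γ * (r : ℂ) ^ (κ - 1) * (p : ℂ) ^ (κ - 2)) * X) *
           (1 - C (γ * (r : ℂ) ^ (κ - 1) * (p : ℂ) ^ (κ - 3)) * X) *
         ((1 - C (γ⁻¹ * (r : ℂ) ^ (κ - 1) * (p : ℂ) ^ (κ - 2)) * X) *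
           (1 - C (γ⁻¹ * (r : ℂ) ^ (κ - 1) * (p : ℂ) ^ (κ - 3)) * X))) *
        ((1 - C (γ * α * (r : ℂ) ^ (κ - 1) * (r : ℂ) ^ (2 * κ - 5)) * X) *
          (1 - C (γ * α⁻¹ * (r : ℂ) ^ (κ - 1) * (r : ℂ) ^ (2 * κ - 5)) * X) *
         ((1 - C (γ⁻¹ * α * (r : ℂ) ^ (κ - 1) * (r : ℂ) ^ (2 * κ - 5)) * X) *
           (1 - C (γ⁻¹ * α⁻¹ * (r : ℂ) ^ (κ - 1) * (r : ℂ) ^ (2 * κ - 5)) * X))) := by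
  have hR : (r : ℂ) ≠ 0 := by
    exact_mod_cast ne_of_gt hr
  have hpz : ∀ n : ℤ, (p:ℂ)^n = (r:ℂ)^(2*n) := by
    intro n
    have hp2 : (p:ℂ) = (r:ℂ)^(2:ℕ) := by exact_mod_cast congrArg Complex.ofReal hr2.symm
    rw [hp2, ← zpow_natCast (r:ℂ) 2, ← zpow_mul]; norm_num
  have hadd : ∀ m n : ℤ, (r:ℂ)^m * (r:ℂ)^n = (r:ℂ)^(m+n) := fun m n => (zpow_add₀ hR m n).symm
  -- RHS constants
  have e1 : γ * (r:ℂ)^(κ-1) * (p:ℂ)^(κ-2) = γ * (r:ℂ)^(3*κ-5) := by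
    rw [hpz, mul_assoc, hadd, show κ-1+2*(κ-2) = 3*κ-5 by ring]
  have e2 : γ * (r:ℂ)^(κ-1) * (p:ℂ)^(κ-3) = γ * (r:ℂ)^(3*κ-7) := by
    rw [hpz, mul_assoc, hadd, show κ-1+2*(κ-3) = 3*κ-7 by ring]
  have e3 : γ⁻¹ * (r:ℂ)^(κ-1) * (p:ℂ)^(κ-2) = γ⁻¹ * (r:ℂ)^(3*κ-5) := by
    rw [hpz, mul_assoc, hadd, show κ-1+2*(κ-2) = 3*κ-5 by ring]
  have e4 : γ⁻¹ * (r:ℂ)^(κ-1) * (p:ℂ)^(κ-3) = γ⁻¹ * (r:ℂ)^(3*κ-7) := by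
    rw [hpz, mul_assoc, hadd, show κ-1+2*(κ-3) = 3*κ-7 by ring]
  have e5 : ∀ c : ℂ, c * (r:ℂ)^(κ-1) * (r:ℂ)^(2*κ-5) = c * (r:ℂ)^(3*κ-6) := by
    intro c
    rw [mul_assoc, hadd, show κ-1+(2*κ-5) = 3*κ-6 by ring]
  -- LHS constants
  have hr7 : (r:ℂ)^(3*κ-7) * (r:ℂ) * (r:ℂ) = (r:ℂ)^(3*κ-5) := by
    rw [show (3*κ-5 : ℤ) = (3*κ-7)+1+1 by ring, zpow_add_one₀ hR, zpow_add_one₀ hR]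
  have hr6 : (r:ℂ)^(3*κ-7) * (r:ℂ) = (r:ℂ)^(3*κ-6) := by
    rw [show (3*κ-6 : ℤ) = (3*κ-7)+1 by ring, zpow_add_one₀ hR]
  have l0 : μ₀ = γ⁻¹ * (r:ℂ)^(3*κ-7) := hμ₀
  have l1 : μ₀ * μ 1 = γ * (r:ℂ)^(3*κ-7) := by
    rw [hμ₀, hμ1]; field_simp
  have l2 : μ₀ * μ 2 = γ⁻¹ * α * (r:ℂ)^(3*κ-6) := by
    rw [hμ₀, hμ2, ← hr6]; ring
  have l3 : μ₀ * μ 3 = γ⁻¹ * α⁻¹ * (r:ℂ)^(3*κ-6) := by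
    rw [hμ₀, hμ3, ← hr6]; ring
  have l12 : μ₀ * (μ 1 * μ 2) = γ * α * (r:ℂ)^(3*κ-6) := by
    rw [hμ₀, hμ1, hμ2, ← hr6]; field_simp
  have l13 : μ₀ * (μ 1 * μ 3) = γ * α⁻¹ * (r:ℂ)^(3*κ-6) := by
    rw [hμ₀, hμ1, hμ3, ← hr6]; field_simp
  have l23 : μ₀ * (μ 2 * μ 3) = γ⁻¹ * (r:ℂ)^(3*κ-5) := by
    rw [hμ₀, hμ2, hμ3, ← hr7]; field_simp
  have l123 : μ₀ * (μ 1 * (μ 2 * μ 3)) = γ * (r:ℂ)^(3*κ-5) := by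
    rw [hμ₀, hμ1, hμ2, hμ3, ← hr7]; field_simp
  rw [show (({1, 2, 3} : Finset ℕ).powerset) =
      {∅, {1}, {2}, {3}, {1,2}, {1,3}, {2,3}, {1,2,3}} from by decide]
  simp (config := { decide := true }) only [Finset.prod_insert, Finset.prod_singleton,
    Finset.prod_empty, mul_one, Finset.mem_insert, Finset.mem_singleton]
  rw [l12, l13, l23, l123, l1, l2, l3, l0, e1, e2, e3, e4, e5, e5, e5, e5]
  ring
end

section
/- Let p be a prime, r > 0 with r² = p, κ an integer, and γ, α nonzero complex numbers. Let ρ₁,…,ρ₈ be the eight numbers μ₀·∏_{i∈S}μᵢ, S ⊆ {1,2,3}, where μ₀ = γ⁻¹p^((3κ-7)/2), μ₁ = γ², μ₂ = αr, μ₃ = α⁻¹r. Set a_f := p^((κ-1)/2)(γ+γ⁻¹) and a_g := p^((2κ-5)/2)(α+α⁻¹). Then the second elementary symmetric polynomial e₂(ρ₁,…,ρ₈) equals p·( Λ₁ + (p²+1)·Λ₂ + (p²+1)²·p^(3κ-12) ), where Λ₂ := a_f²p^(2κ-8) + a_g p^(2κ-7)(p+1) − p^(3κ-12)(p³+1) and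 Λ₁ := a_f²·a_g·p^(κ-4)(p+1) + a_f²p^(2κ-8)(p²-1) + a_g²p^(κ-2) − a_g p^(2κ-7)(p²+1)(p+1) + p^(3κ-10)(p³+1)(p-1). -/
set_option maxHeartbeats 1000000 in
lemma pc1 {β : Type*} (h : β) : Multiset.powersetCard 1 ({h} : Multiset β) = {{h}} := by
  rw [← Multiset.cons_zero h, Multiset.powersetCard_cons]; simp [Multiset.powersetCard_zero_right 0]

lemma esymm2_explicit (a b c d e f g h : ℂ) :
    (({a,b,c,d,e,f,g,h} : Multiset ℂ).esymm 2)
    = a*b+a*c+a*d+a*e+a*f+a*g+a*h+b*c+b*d+b*e+b*f+b*g+b*h+c*d+c*e+c*f+c*g+c*h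
      +d*e+d*f+d*g+d*h+e*f+e*g+e*h+f*g+f*h+g*h := by
  simp [Multiset.esymm, Multiset.powersetCard_cons, pc1]
  ring

set_option maxHeartbeats 2000000 in
/-- e₂ of the eight inverse spinor roots of a degree-3 Miyawaki lift equals
p(Λ₁ + (p²+1)Λ₂ + (p²+1)²p^(3κ-12)) with Miyawaki's conjectured eigenvalues
Λ₁ = λ_F(T₁(p²)), Λ₂ = λ_F(T₂(p²)). -/
theorem e2_spinor_roots (p : ℕ) (hp : Nat.Prime p) (r : ℝ) (hr : 0 < r)
    (hr2 : r ^ 2 = (p : ℝ)) (κ : ℤ) (γ α : ℂ) (hγ : γ ≠ 0) (hα : α ≠ 0)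
    (μ₀ : ℂ) (hμ₀ : μ₀ = γ⁻¹ * (r : ℂ) ^ (3 * κ - 7))
    (μ : ℕ → ℂ) (hμ1 : μ 1 = γ ^ 2) (hμ2 : μ 2 = α * (r : ℂ)) (hμ3 : μ 3 = α⁻¹ * (r : ℂ))
    (a_f a_g : ℂ) (haf : a_f = (r : ℂ) ^ (κ - 1) * (γ + γ⁻¹))
    (hag : a_g = (r : ℂ) ^ (2 * κ - 5) * (α + α⁻¹))
    (Λ₁ Λ₂ : ℂ)
    (hΛ₂ : Λ₂ = a_f ^ 2 * (p : ℂ) ^ (2 * κ - 8) + a_g * (p : ℂ) ^ (2 * κ - 7) * ((p : ℂ) + 1)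
        - (p : ℂ) ^ (3 * κ - 12) * ((p : ℂ) ^ (3 : ℕ) + 1))
    (hΛ₁ : Λ₁ = a_f ^ 2 * a_g * (p : ℂ) ^ (κ - 4) * ((p : ℂ) + 1)
        + a_f ^ 2 * (p : ℂ) ^ (2 * κ - 8) * ((p : ℂ) ^ (2 : ℕ) - 1)
        + a_g ^ 2 * (p : ℂ) ^ (κ - 2)
        - a_g * (p : ℂ) ^ (2 * κ - 7) * ((p : ℂ) ^ (2 : ℕ) + 1) * ((p : ℂ) + 1)
        + (p : ℂ) ^ (3 * κ - 10) * ((p : ℂ) ^ (3 : ℕ) + 1) * ((p : ℂ) - 1)) :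
    (((({1, 2, 3} : Finset ℕ).powerset.val).map (fun S => μ₀ * ∏ i ∈ S, μ i)).esymm 2)
      = (p : ℂ) * (Λ₁ + ((p : ℂ) ^ (2 : ℕ) + 1) * Λ₂
          + ((p : ℂ) ^ (2 : ℕ) + 1) ^ 2 * (p : ℂ) ^ (3 * κ - 12)) := by
  set R : ℂ := (r : ℂ) with hRdef
  have hR : R ≠ 0 := by
    simp only [hRdef, ne_eq, Complex.ofReal_eq_zero]; exact ne_of_gt hr
  have hp2 : (p : ℂ) = R ^ (2 : ℕ) := by
    rw [hRdef]; exact_mod_cast hr2.symm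
  have key : ∀ (n m : ℕ), R ^ ((n : ℤ) * κ - (m : ℕ)) = (R ^ κ) ^ n / R ^ m := by
    intro n m
    rw [zpow_sub₀ hR, mul_comm, zpow_mul, zpow_natCast, zpow_natCast]
  have keyp : ∀ (n m : ℕ), (p : ℂ) ^ ((n : ℤ) * κ - (m : ℕ)) = (R ^ κ) ^ (2 * n) / R ^ (2 * m) := by
    intro n m
    rw [hp2, ← zpow_natCast R 2, ← zpow_mul,
      show ((2:ℕ) : ℤ) * ((n : ℤ) * κ - (m : ℕ)) = ((2 * n : ℕ) : ℤ) * κ - ((2 * m : ℕ) : ℤ) by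
        push_cast; ring, key]
  have hms : ((({1, 2, 3} : Finset ℕ).powerset.val).map (fun S => μ₀ * ∏ i ∈ S, μ i))
      = ({μ₀ * 1, μ₀ * (μ 1), μ₀ * (μ 2), μ₀ * (μ 1 * μ 2), μ₀ * (μ 3), μ₀ * (μ 1 * μ 3),
          μ₀ * (μ 2 * μ 3), μ₀ * (μ 1 * (μ 2 * μ 3))} : Multiset ℂ) := by
    have hpow : (({1, 2, 3} : Finset ℕ).powerset.val)
        = ({∅, {1}, {2}, {1,2}, {3}, {1,3}, {2,3}, {1,2,3}} : Multiset (Finset ℕ)) := by decide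
    rw [hpow]
    simp [Finset.prod_insert, Finset.prod_pair, mul_assoc]
  rw [hms, esymm2_explicit, hμ1, hμ2, hμ3]
  subst hΛ₁ hΛ₂ haf hag hμ₀
  rw [show (3 * κ - 7 : ℤ) = ((3 : ℕ) : ℤ) * κ - ((7 : ℕ) : ℤ) by push_cast; ring,
    show (κ - 1 : ℤ) = ((1 : ℕ) : ℤ) * κ - ((1 : ℕ) : ℤ) by push_cast; ring,
    show (2 * κ - 5 : ℤ) = ((2 : ℕ) : ℤ) * κ - ((5 : ℕ) : ℤ) by push_cast; ring,
    show (2 * κ - 8 : ℤ) = ((2 : ℕ) : ℤ) * κ - ((8 : ℕ) : ℤ) by push_cast; ring,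
    show (2 * κ - 7 : ℤ) = ((2 : ℕ) : ℤ) * κ - ((7 : ℕ) : ℤ) by push_cast; ring,
    show (3 * κ - 12 : ℤ) = ((3 : ℕ) : ℤ) * κ - ((12 : ℕ) : ℤ) by push_cast; ring,
    show (κ - 4 : ℤ) = ((1 : ℕ) : ℤ) * κ - ((4 : ℕ) : ℤ) by push_cast; ring,
    show (κ - 2 : ℤ) = ((1 : ℕ) : ℤ) * κ - ((2 : ℕ) : ℤ) by push_cast; ring,
    show (3 * κ - 10 : ℤ) = ((3 : ℕ) : ℤ) * κ - ((10 : ℕ) : ℤ) by push_cast; ring]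
  simp only [key, keyp]
  rw [hp2]
  have htne : R ^ κ ≠ 0 := zpow_ne_zero κ hR
  generalize R ^ κ = t at *
  simp only [div_eq_mul_inv, ← inv_pow]
  have h1 : γ * γ⁻¹ = 1 := mul_inv_cancel₀ hγ
  have h2 : α * α⁻¹ = 1 := mul_inv_cancel₀ hα
  have h3 : R * R⁻¹ = 1 := mul_inv_cancel₀ hR
  linear_combination (norm := ring1) (R⁻¹ ^ 14 * t ^ 6 + (-4) * R ^ 6 * R⁻¹ ^ 18 * t ^ 6 + 2 * α⁻¹ * R * R⁻¹ ^ 14 * t ^ 6 + (-2) * α⁻¹ * R ^ 2 * R⁻¹ ^ 15 * t ^ 6 + (-2) * α⁻¹ * R ^ 4 * R⁻¹ ^ 15 * t ^ 6 + α⁻¹ ^ 2 * R ^ 2 * R⁻¹ ^ 14 * t ^ 6 + 2 * α * R * R⁻¹ ^ 14 * t ^ 6 + (-2) * α * R ^ 2 * R⁻¹ ^ 15 * t ^ 6 + (-2) * α * R ^ 4 * R⁻¹ ^ 15 * t ^ 6 + 4 * α * α⁻¹ * R ^ 2 * R⁻¹ ^ 14 * t ^ 6 + 2 * α * α⁻¹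 ^ 2 * R ^ 3 * R⁻¹ ^ 14 * t ^ 6 + α ^ 2 * R ^ 2 * R⁻¹ ^ 14 * t ^ 6 + 2 * α ^ 2 * α⁻¹ * R ^ 3 * R⁻¹ ^ 14 * t ^ 6 + α ^ 2 * α⁻¹ ^ 2 * R ^ 4 * R⁻¹ ^ 14 * t ^ 6 + γ * γ⁻¹ * R⁻¹ ^ 14 * t ^ 6 + 2 * γ * γ⁻¹ * α⁻¹ * R * R⁻¹ ^ 14 * t ^ 6 + γ * γ⁻¹ * α⁻¹ ^ 2 * R ^ 2 * R⁻¹ ^ 14 * t ^ 6 + 2 * γ * γ⁻¹ * α * R * R⁻¹ ^ 14 * t ^ 6 + 4 * γ * γ⁻¹ * α * α⁻¹ * R ^ 2 * R⁻¹ ^ 14 * t ^ 6 + 2 * γ * γ⁻¹ * α * α⁻¹ ^ 2 * R ^ 3 * R⁻¹ ^ 14 * t ^ 6 + γ * γ⁻¹ * α ^ 2 * R ^ 2 * R⁻¹ ^ 14 * t ^ 6 + 2 * γ * γ⁻¹ * α ^ 2 * α⁻¹ * R ^ 3 * R⁻¹ ^ 14 * t ^ 6 + γ * γ⁻¹ *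 α ^ 2 * α⁻¹ ^ 2 * R ^ 4 * R⁻¹ ^ 14 * t ^ 6 + γ ^ 2 * α⁻¹ * R * R⁻¹ ^ 14 * t ^ 6 + γ ^ 2 * α * R * R⁻¹ ^ 14 * t ^ 6 + 2 * γ ^ 2 * α * α⁻¹ * R ^ 2 * R⁻¹ ^ 14 * t ^ 6 + γ ^ 2 * α * α⁻¹ ^ 2 * R ^ 3 * R⁻¹ ^ 14 * t ^ 6 + γ ^ 2 * α ^ 2 * α⁻¹ * R ^ 3 * R⁻¹ ^ 14 * t ^ 6 + γ ^ 3 * γ⁻¹ * α⁻¹ * R * R⁻¹ ^ 14 * t ^ 6 + γ ^ 3 * γ⁻¹ * α * R * R⁻¹ ^ 14 * t ^ 6 + 2 * γ ^ 3 * γ⁻¹ * α * α⁻¹ * R ^ 2 * R⁻¹ ^ 14 * t ^ 6 + γ ^ 3 * γ⁻¹ * α * α⁻¹ ^ 2 * R ^ 3 * R⁻¹ ^ 14 * t ^ 6 + γ ^ 3 * γ⁻¹ * α ^ 2 * α⁻¹ * R ^ 3 * R⁻¹ ^ 14 * t ^ 6) * h1 + (2 * R ^ 2 * R⁻¹ ^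 14 * t ^ 6 + R ^ 4 * R⁻¹ ^ 14 * t ^ 6 + 2 * α⁻¹ * R ^ 3 * R⁻¹ ^ 14 * t ^ 6 + 2 * α * R ^ 3 * R⁻¹ ^ 14 * t ^ 6 + α * α⁻¹ * R ^ 4 * R⁻¹ ^ 14 * t ^ 6 + 2 * γ⁻¹ ^ 2 * R ^ 2 * R⁻¹ ^ 14 * t ^ 6 + γ⁻¹ ^ 2 * α⁻¹ * R ^ 3 * R⁻¹ ^ 14 * t ^ 6 + γ⁻¹ ^ 2 * α * R ^ 3 * R⁻¹ ^ 14 * t ^ 6 + 2 * γ ^ 2 * R ^ 2 * R⁻¹ ^ 14 * t ^ 6 + γ ^ 2 * α⁻¹ * R ^ 3 * R⁻¹ ^ 14 * t ^ 6 + γ ^ 2 * α * R ^ 3 * R⁻¹ ^ 14 * t ^ 6) * h2 + ((-1) * R⁻¹ ^ 14 * t ^ 6 + (-1) * R * R⁻¹ ^ 15 * t ^ 6 + (-2) * R ^ 2 * R⁻¹ ^ 14 * t ^ 6 + (-1) * R ^ 2 * R⁻¹ ^ 16 * t ^ 6 + (-1) * R ^ 2 * R⁻¹ ^ 20 * t ^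 6 + (-2) * R ^ 3 * R⁻¹ ^ 15 * t ^ 6 + (-1) * R ^ 3 * R⁻¹ ^ 17 * t ^ 6 + (-1) * R ^ 3 * R⁻¹ ^ 21 * t ^ 6 + (-1) * R ^ 4 * R⁻¹ ^ 14 * t ^ 6 + (-2) * R ^ 4 * R⁻¹ ^ 16 * t ^ 6 + (-1) * R ^ 4 * R⁻¹ ^ 18 * t ^ 6 + R ^ 4 * R⁻¹ ^ 20 * t ^ 6 + (-1) * R ^ 4 * R⁻¹ ^ 22 * t ^ 6 + (-1) * R ^ 5 * R⁻¹ ^ 15 * t ^ 6 + (-2) * R ^ 5 * R⁻¹ ^ 17 * t ^ 6 + (-1) * R ^ 5 * R⁻¹ ^ 19 * t ^ 6 + R ^ 5 * R⁻¹ ^ 21 * t ^ 6 + (-1) * R ^ 5 * R⁻¹ ^ 23 * t ^ 6 + (-1) * R ^ 6 * R⁻¹ ^ 16 * t ^ 6 + 2 * R ^ 6 * R⁻¹ ^ 18 * t ^ 6 + (-1) * R ^ 6 * R⁻¹ ^ 20 * t ^ 6 + R ^ 6 * R⁻¹ ^ 22 * t ^ 6 + (-1) * R ^ 7 * R⁻¹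 ^ 17 * t ^ 6 + 2 * R ^ 7 * R⁻¹ ^ 19 * t ^ 6 + (-1) * R ^ 7 * R⁻¹ ^ 21 * t ^ 6 + R ^ 7 * R⁻¹ ^ 23 * t ^ 6 + (-1) * R ^ 8 * R⁻¹ ^ 18 * t ^ 6 + R ^ 8 * R⁻¹ ^ 20 * t ^ 6 + (-1) * R ^ 8 * R⁻¹ ^ 22 * t ^ 6 + (-1) * R ^ 9 * R⁻¹ ^ 19 * t ^ 6 + R ^ 9 * R⁻¹ ^ 21 * t ^ 6 + (-1) * R ^ 9 * R⁻¹ ^ 23 * t ^ 6 + R ^ 10 * R⁻¹ ^ 22 * t ^ 6 + R ^ 11 * R⁻¹ ^ 23 * t ^ 6 + (-2) * α⁻¹ * R * R⁻¹ ^ 14 * t ^ 6 + (-2) * α⁻¹ * R ^ 3 * R⁻¹ ^ 14 * t ^ 6 + (-2) * α * R * R⁻¹ ^ 14 * t ^ 6 + (-2) * α * R ^ 3 * R⁻¹ ^ 14 * t ^ 6 + (-2) * γ⁻¹ ^ 2 * R ^ 2 * R⁻¹ ^ 14 * t ^ 6 + (-2) * γ⁻¹ ^ 2 * R ^ 3 *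 R⁻¹ ^ 15 * t ^ 6 + (-2) * γ⁻¹ ^ 2 * R ^ 4 * R⁻¹ ^ 16 * t ^ 6 + (-2) * γ⁻¹ ^ 2 * R ^ 5 * R⁻¹ ^ 17 * t ^ 6 + (-1) * γ⁻¹ ^ 2 * α⁻¹ * R * R⁻¹ ^ 14 * t ^ 6 + (-1) * γ⁻¹ ^ 2 * α⁻¹ * R ^ 3 * R⁻¹ ^ 14 * t ^ 6 + (-1) * γ⁻¹ ^ 2 * α * R * R⁻¹ ^ 14 * t ^ 6 + (-1) * γ⁻¹ ^ 2 * α * R ^ 3 * R⁻¹ ^ 14 * t ^ 6 + (-2) * γ ^ 2 * R ^ 2 * R⁻¹ ^ 14 * t ^ 6 + (-2) * γ ^ 2 * R ^ 3 * R⁻¹ ^ 15 * t ^ 6 + (-2) * γ ^ 2 * R ^ 4 * R⁻¹ ^ 16 * t ^ 6 + (-2) * γ ^ 2 * R ^ 5 * R⁻¹ ^ 17 * t ^ 6 + (-1) * γ ^ 2 * α⁻¹ * R * R⁻¹ ^ 14 * t ^ 6 + (-1) * γ ^ 2 * α⁻¹ * R ^ 3 * R⁻¹ ^ 14 * t ^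 6 + (-1) * γ ^ 2 * α * R * R⁻¹ ^ 14 * t ^ 6 + (-1) * γ ^ 2 * α * R ^ 3 * R⁻¹ ^ 14 * t ^ 6) * h3
end
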